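/- Let f : R^d → R be L-smooth, let x, δ ∈ R^d, and let g ∈ R^d be a random vector with E[g] = ∇f(x + δ) and E[‖g − ∇f(x+δ)‖²] ≤ σ². Then for a stepsize η with 0 < η ≤ 1/(2L), E[f(x − η g)] ≤ f(x) − (η/2)‖∇f(x)‖² − (η/4)‖∇f(x+δ)‖² + L η² σ² + (η L²/2)‖δ‖². -/

import Mathlib

open MeasureTheory
open scoped RealInnerProductSpace

lemma descent_aux {d : ℕ} (f : EuclideanSpace ℝ (Fin d) → ℝ) (L : ℝ)
    (hdiff : Differentiable ℝ f)
    (hlip : ∀ x y, ‖gradient f x - gradient f y‖ ≤ L * ‖x - y‖)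
    (x y : EuclideanSpace ℝ (Fin d)) :
    f y ≤ f x + ⟪gradient f x, y - x⟫ + L / 2 * ‖y - x‖ ^ 2 := by
  set v := y - x with hv
  have hline : ∀ t : ℝ, HasDerivAt (fun t : ℝ => f (x + t • v))
      ⟪gradient f (x + t • v), v⟫ t := by
    intro t
    have h1 : HasDerivAt (fun t : ℝ => x + t • v) v t := by
      simpa using ((hasDerivAt_id t).smul_const v).const_add x
    have h2 := ((hdiff (x + t • v)).hasGradientAt).hasFDerivAt
    have := h2.comp_hasDerivAt t h1
    simpa [InnerProductSpace.toDual_apply_apply, Function.comp_def] using this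
  set φ : ℝ → ℝ := fun t =>
    L / 2 * t ^ 2 * ‖v‖ ^ 2 + t * ⟪gradient f x, v⟫ - f (x + t • v) with hφdef
  have hφ : ∀ t, HasDerivAt φ
      (L * t * ‖v‖ ^ 2 + ⟪gradient f x, v⟫ - ⟪gradient f (x + t • v), v⟫) t := by
    intro t
    have hA : HasDerivAt (fun t : ℝ => L / 2 * t ^ 2 * ‖v‖ ^ 2) (L * t * ‖v‖ ^ 2) t := by
      have := ((hasDerivAt_pow 2 t).const_mul (L / 2)).mul_const (‖v‖ ^ 2)
      convert this using 1
      · rfl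
      · rfl
      · rw [show (2:ℕ) - 1 = 1 from rfl]
        push_cast
        ring
    have hB : HasDerivAt (fun t : ℝ => t * ⟪gradient f x, v⟫) ⟪gradient f x, v⟫ t := by
      simpa using (hasDerivAt_id t).mul_const ⟪gradient f x, v⟫
    exact (hA.add hB).sub (hline t)
  have hmono : MonotoneOn φ (Set.Icc (0:ℝ) 1) := by
    apply monotoneOn_of_deriv_nonneg (convex_Icc 0 1)
    · exact fun t _ => (hφ t).continuousAt.continuousWithinAt
    · exact fun t _ => ((hφ t).differentiableAt).differentiableWithinAt
    · intro t ht
      rw [interior_Icc] at ht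
      rw [(hφ t).deriv]
      have h1 : ⟪gradient f (x + t • v) - gradient f x, v⟫ ≤
          ‖gradient f (x + t • v) - gradient f x‖ * ‖v‖ := real_inner_le_norm _ _
      have h2 : ‖gradient f (x + t • v) - gradient f x‖ ≤ L * (t * ‖v‖) := by
        have := hlip (x + t • v) x
        simpa [norm_smul, abs_of_nonneg ht.1.le, mul_assoc] using this
      have h3 : ⟪gradient f (x + t • v), v⟫ - ⟪gradient f x, v⟫
          ≤ L * t * ‖v‖ ^ 2 := by
        rw [← inner_sub_left]
        nlinarith [norm_nonneg v, norm_nonneg (gradient f (x + t • v) - gradient f x)]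
      linarith
  have h01 := hmono (Set.mem_Icc.mpr ⟨le_refl 0, zero_le_one⟩)
    (Set.mem_Icc.mpr ⟨zero_le_one, le_refl 1⟩) zero_le_one
  have hxy : x + (1:ℝ) • v = y := by
    rw [one_smul, hv]
    abel
  simp only [hφdef, hxy, zero_smul, add_zero, one_pow, zero_pow, one_mul, zero_mul,
    mul_zero] at h01
  linarith

set_option maxHeartbeats 1000000 in
theorem descent_lemma (d : ℕ) (f : EuclideanSpace ℝ (Fin d) → ℝ) (L σ η : ℝ)
    (hL : 0 < L) (hdiff : Differentiable ℝ f)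
    (hlip : ∀ x y, ‖gradient f x - gradient f y‖ ≤ L * ‖x - y‖)
    {Ω : Type*} [MeasurableSpace Ω] (μ : Measure Ω) [IsProbabilityMeasure μ]
    (g : Ω → EuclideanSpace ℝ (Fin d)) (x δ : EuclideanSpace ℝ (Fin d))
    (hg_int : Integrable g μ)
    (hg_sq_int : Integrable (fun ω => ‖g ω - gradient f (x + δ)‖ ^ 2) μ)
    (hf_int : Integrable (fun ω => f (x - η • g ω)) μ)
    (hmean : ∫ ω, g ω ∂μ = gradient f (x + δ))
    (hvar : ∫ ω, ‖g ω - gradient f (x + δ)‖ ^ 2 ∂μ ≤ σ ^ 2)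
    (hη : 0 < η) (hη2 : η ≤ 1 / (2 * L)) :
    ∫ ω, f (x - η • g ω) ∂μ ≤
      f x - (η / 2) * ‖gradient f x‖ ^ 2 - (η / 4) * ‖gradient f (x + δ)‖ ^ 2
        + L * η ^ 2 * σ ^ 2 + (η * L ^ 2 / 2) * ‖δ‖ ^ 2 := by
  set G := gradient f x with hG
  set c := gradient f (x + δ) with hc
  -- pointwise descent bound
  have h1 : ∀ ω, f (x - η • g ω) ≤
      (f x - η * ⟪G, g ω⟫) + (L / 2 * η ^ 2) * ‖g ω‖ ^ 2 := by
    intro ω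
    have := descent_aux f L hdiff hlip x (x - η • g ω)
    have hsub : x - η • g ω - x = -(η • g ω) := by abel
    rw [hsub] at this
    calc f (x - η • g ω) ≤ f x + ⟪G, -(η • g ω)⟫ + L / 2 * ‖-(η • g ω)‖ ^ 2 := this
      _ = (f x - η * ⟪G, g ω⟫) + (L / 2 * η ^ 2) * ‖g ω‖ ^ 2 := by
          rw [inner_neg_right, real_inner_smul_right, norm_neg, norm_smul]
          simp [abs_of_nonneg hη.le]
          ring
  -- integrability
  have I1 : Integrable (fun ω => ⟪G, g ω⟫) μ := hg_int.const_inner G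
  have I2 : Integrable (fun ω => ‖g ω‖ ^ 2) μ := by
    refine Integrable.mono' ((hg_sq_int.const_mul 2).add (integrable_const (2 * ‖c‖ ^ 2)))
      ((continuous_norm.pow 2).comp_aestronglyMeasurable hg_int.aestronglyMeasurable) ?_
    filter_upwards with ω
    have hn : ‖g ω‖ ≤ ‖g ω - c‖ + ‖c‖ := by
      simpa using norm_add_le (g ω - c) c
    simp only [Pi.add_apply]
    rw [Real.norm_eq_abs, abs_of_nonneg (by positivity)]
    nlinarith [norm_nonneg (g ω - c), norm_nonneg c, norm_nonneg (g ω),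
      sq_nonneg (‖g ω - c‖ - ‖c‖), pow_le_pow_left₀ (norm_nonneg (g ω)) hn 2]
  have Ia : Integrable (fun ω => f x - η * ⟪G, g ω⟫) μ :=
    (integrable_const (f x)).sub (I1.const_mul η)
  have Ib : Integrable (fun ω => (L / 2 * η ^ 2) * ‖g ω‖ ^ 2) μ := I2.const_mul _
  have Ih : Integrable (fun ω => (f x - η * ⟪G, g ω⟫) + (L / 2 * η ^ 2) * ‖g ω‖ ^ 2) μ :=
    Ia.add Ib
  have hle := integral_mono hf_int Ih h1
  -- compute integral of the bound
  have hgc : ∫ ω, ⟪G, g ω⟫ ∂μ = ⟪G, c⟫ := by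
    rw [integral_inner hg_int, hmean]
  have hsplit : ∫ ω, ((f x - η * ⟪G, g ω⟫) + (L / 2 * η ^ 2) * ‖g ω‖ ^ 2) ∂μ
      = f x - η * ⟪G, c⟫ + (L / 2 * η ^ 2) * ∫ ω, ‖g ω‖ ^ 2 ∂μ := by
    rw [integral_add Ia Ib, integral_sub (integrable_const (f x)) (I1.const_mul η),
      integral_const, integral_const_mul, integral_const_mul, hgc]
    simp
  -- bound on second moment
  have hsm : ∫ ω, ‖g ω‖ ^ 2 ∂μ ≤ σ ^ 2 + ‖c‖ ^ 2 := by
    have hexp : ∀ ω, ‖g ω‖ ^ 2 = ‖g ω - c‖ ^ 2 + 2 * ⟪c, g ω - c⟫ + ‖c‖ ^ 2 := by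
      intro ω
      have := norm_add_sq_real (g ω - c) c
      rw [sub_add_cancel] at this
      rw [this, real_inner_comm]
    have hint0 : Integrable (fun ω => g ω - c) μ := hg_int.sub (integrable_const c)
    have Ic : Integrable (fun ω => 2 * ⟪c, g ω - c⟫) μ := (hint0.const_inner c).const_mul 2
    have Id : Integrable (fun ω => ‖g ω - c‖ ^ 2 + 2 * ⟪c, g ω - c⟫) μ := hg_sq_int.add Ic
    have hz : ∫ ω, ⟪c, g ω - c⟫ ∂μ = 0 := by
      rw [integral_inner hint0, integral_sub hg_int (integrable_const c), hmean,
        integral_const]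
      simp
    calc ∫ ω, ‖g ω‖ ^ 2 ∂μ
        = ∫ ω, (‖g ω - c‖ ^ 2 + 2 * ⟪c, g ω - c⟫ + ‖c‖ ^ 2) ∂μ := by
          simp_rw [hexp]
      _ = (∫ ω, ‖g ω - c‖ ^ 2 ∂μ) + 2 * (∫ ω, ⟪c, g ω - c⟫ ∂μ) + ‖c‖ ^ 2 := by
          rw [integral_add Id (integrable_const _), integral_add hg_sq_int Ic,
            integral_const_mul, integral_const]
          simp
      _ = (∫ ω, ‖g ω - c‖ ^ 2 ∂μ) + ‖c‖ ^ 2 := by rw [hz]; ring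
      _ ≤ σ ^ 2 + ‖c‖ ^ 2 := by linarith
  -- final arithmetic
  have hGc : ‖G - c‖ ^ 2 = ‖G‖ ^ 2 - 2 * ⟪G, c⟫ + ‖c‖ ^ 2 := by
    rw [norm_sub_sq_real]
  have hlipx : ‖G - c‖ ≤ L * ‖δ‖ := by
    have := hlip x (x + δ)
    have hxd : x - (x + δ) = -δ := by abel
    rwa [hxd, norm_neg] at this
  have hsq : ‖G - c‖ ^ 2 ≤ L ^ 2 * ‖δ‖ ^ 2 := by
    nlinarith [norm_nonneg (G - c), norm_nonneg δ, hL.le]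
  have hLη : η * (2 * L) ≤ 1 := (le_div_iff₀ (by positivity)).mp hη2
  have hσ : (0:ℝ) ≤ σ ^ 2 := sq_nonneg σ
  have hcn : (0:ℝ) ≤ ‖c‖ ^ 2 := sq_nonneg _
  have ha : η * ⟪G, c⟫ = η / 2 * ‖G‖ ^ 2 + η / 2 * ‖c‖ ^ 2 - η / 2 * ‖G - c‖ ^ 2 := by
    rw [hGc]; ring
  have e1 : η / 2 * ‖G - c‖ ^ 2 ≤ η / 2 * (L ^ 2 * ‖δ‖ ^ 2) :=
    mul_le_mul_of_nonneg_left hsq (by positivity)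
  have e2 : L / 2 * η ^ 2 * ‖c‖ ^ 2 ≤ η / 4 * ‖c‖ ^ 2 := by
    have h := mul_nonneg (mul_nonneg hη.le hcn) (by linarith : (0:ℝ) ≤ 1 - η * (2 * L))
    nlinarith [h]
  have e3 : L / 2 * η ^ 2 * σ ^ 2 ≤ L * η ^ 2 * σ ^ 2 := by
    have h := mul_nonneg (mul_nonneg hL.le (sq_nonneg η)) hσ
    nlinarith [h]
  have hstep : f x - η * ⟪G, c⟫ + (L / 2 * η ^ 2) * (σ ^ 2 + ‖c‖ ^ 2) ≤
      f x - (η / 2) * ‖G‖ ^ 2 - (η / 4) * ‖c‖ ^ 2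
        + L * η ^ 2 * σ ^ 2 + (η * L ^ 2 / 2) * ‖δ‖ ^ 2 := by
    nlinarith [ha, e1, e2, e3]
  have hmul : (L / 2 * η ^ 2) * (∫ ω, ‖g ω‖ ^ 2 ∂μ) ≤ (L / 2 * η ^ 2) * (σ ^ 2 + ‖c‖ ^ 2) :=
    mul_le_mul_of_nonneg_left hsm (by positivity)
  calc ∫ ω, f (x - η • g ω) ∂μ
      ≤ f x - η * ⟪G, c⟫ + (L / 2 * η ^ 2) * ∫ ω, ‖g ω‖ ^ 2 ∂μ := by
        rw [← hsplit]; exact hle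
    _ ≤ f x - η * ⟪G, c⟫ + (L / 2 * η ^ 2) * (σ ^ 2 + ‖c‖ ^ 2) := by linarith
    _ ≤ _ := hstep
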